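/- arXiv:1407.0792 — 2 statements merged into one kernel-verified Lean document; each statement's English description precedes it below -/
import Mathlib

section
/- For every natural number m, lim_{c→0, c≠0} Σ_{n∈ℤ} (c·n)^m |a_n(c)|² = ∫_{−√2}^{√2} x^m/(π√(2−x²)) dx; that is, the moments of the discrete arcsine law μ_c converge to those of the arcsine law as c tends to 0. -/
open Filter

/-- `a_n(c)`, the `n`-th Fourier coefficient of `t ↦ exp(i·√2·sin t / c)`. -/
noncomputable def arcsineFourierCoeff (c : ℝ) (n : ℤ) : ℂ :=
  (1 / (2 * Real.pi)) * ∫ t in (0 : ℝ)..(2 * Real.pi),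
    Complex.exp (Complex.I * ((Real.sqrt 2 * Real.sin t / c : ℝ) : ℂ)) *
      Complex.exp (-(Complex.I * (n : ℂ) * (t : ℂ)))

namespace ArcsineAux

open MeasureTheory Real Complex AddCircle intervalIntegral

lemma intExp (k : ℤ) :
    ∫ t in (0:ℝ)..(2*π), Complex.exp (Complex.I * k * t)
      = if k = 0 then (2*π : ℂ) else 0 := by
  rcases eq_or_ne k 0 with hk | hk
  · simp [hk]
  · rw [if_neg hk]
    have hc : Complex.I * k ≠ 0 := by
      simp [Complex.I_ne_zero, Complex.ext_iff, hk]
    have := integral_exp_mul_complex (a := 0) (b := 2*π) hc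
    simp only [mul_assoc] at this ⊢
    rw [this]
    have h1 : Complex.exp (Complex.I * ((k : ℂ) * ((2*π : ℝ) : ℂ))) = 1 := by
      rw [show Complex.I * ((k : ℂ) * ((2*π : ℝ) : ℂ)) = (k : ℂ) * (2 * π * Complex.I) by
        push_cast; ring]
      exact Complex.exp_int_mul_two_pi_mul_I k
    push_cast at h1 ⊢
    simp [h1]

/-- The integrand of the Fourier coefficient, with exponentials merged. -/
noncomputable def efun (c : ℝ) (k : ℤ) (t : ℝ) : ℂ :=
  Complex.exp (Complex.I * ((Real.sqrt 2 * Real.sin t / c : ℝ) : ℂ) - Complex.I * k * t)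

lemma efun_cont (c : ℝ) (k : ℤ) : Continuous (efun c k) := by
  apply Complex.continuous_exp.comp
  fun_prop

lemma acf_eq (c : ℝ) (n : ℤ) :
    arcsineFourierCoeff c n
      = ((1 / (2*π) : ℝ) : ℂ) * ∫ t in (0:ℝ)..(2*π), efun c n t := by
  unfold arcsineFourierCoeff efun
  rw [show ((1 : ℂ) / (2 * Real.pi)) = ((1 / (2*π) : ℝ) : ℂ) by push_cast; ring]
  congr 1
  apply intervalIntegral.integral_congr
  intro t ht
  simp only [← Complex.exp_add]
  congr 1

lemma recursion {c : ℝ} (hc : c ≠ 0) (n : ℤ) :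
    (c : ℂ) * n * arcsineFourierCoeff c n
      = ((Real.sqrt 2 / 2 : ℝ) : ℂ)
          * (arcsineFourierCoeff c (n-1) + arcsineFourierCoeff c (n+1)) := by
  have hψ : ∀ t : ℝ, HasDerivAt
      (fun t : ℝ => Complex.I * ((Real.sqrt 2 * Real.sin t / c : ℝ) : ℂ)
        - Complex.I * n * t)
      (Complex.I * ((Real.sqrt 2 * Real.cos t / c : ℝ) : ℂ) - Complex.I * n) t := by
    intro t
    have h1 : HasDerivAt (fun t : ℝ => ((Real.sqrt 2 * Real.sin t / c : ℝ) : ℂ))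
        ((Real.sqrt 2 * Real.cos t / c : ℝ) : ℂ) t :=
      (((Real.hasDerivAt_sin t).const_mul (Real.sqrt 2)).div_const c).ofReal_comp
    have h2 : HasDerivAt (fun t : ℝ => Complex.I * n * (t : ℂ)) (Complex.I * n) t := by
      simpa using (Complex.ofRealCLM.hasDerivAt (x := t)).const_mul (Complex.I * (n:ℂ))
    exact (h1.const_mul Complex.I).sub h2
  have key : (∫ t in (0:ℝ)..(2*π),
      efun c n t * (Complex.I * ((Real.sqrt 2 * Real.cos t / c : ℝ) : ℂ) - Complex.I * n)) = 0 := by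
    have hD : ∀ t ∈ Set.uIcc (0:ℝ) (2*π), HasDerivAt (efun c n)
        (efun c n t * (Complex.I * ((Real.sqrt 2 * Real.cos t / c : ℝ) : ℂ) - Complex.I * n)) t := by
      intro t _
      exact (hψ t).cexp
    have hInt : IntervalIntegrable (fun t =>
        efun c n t * (Complex.I * ((Real.sqrt 2 * Real.cos t / c : ℝ) : ℂ) - Complex.I * n))
        volume 0 (2*π) := by
      apply Continuous.intervalIntegrable
      exact (efun_cont c n).mul (Continuous.sub (by fun_prop) continuous_const)
    rw [intervalIntegral.integral_eq_sub_of_hasDerivAt hD hInt]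
    have ha : efun c n (2*π) = 1 := by
      unfold efun
      simp only [Real.sin_two_pi, mul_zero, zero_div]
      rw [show Complex.I * ((0:ℝ):ℂ) - Complex.I * n * ((2*π:ℝ):ℂ)
          = ((-n : ℤ) : ℂ) * (2*π*Complex.I) by push_cast; ring]
      exact Complex.exp_int_mul_two_pi_mul_I _
    have hb : efun c n 0 = 1 := by
      unfold efun
      simp
    rw [ha, hb, sub_self]
  have split : (∫ t in (0:ℝ)..(2*π),
      efun c n t * (Complex.I * ((Real.sqrt 2 * Real.cos t / c : ℝ) : ℂ) - Complex.I * n))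
      = (Complex.I / c) * (∫ t in (0:ℝ)..(2*π), ((Real.sqrt 2 * Real.cos t : ℝ) : ℂ) * efun c n t)
        - Complex.I * n * ∫ t in (0:ℝ)..(2*π), efun c n t := by
    rw [← intervalIntegral.integral_const_mul, ← intervalIntegral.integral_const_mul,
      ← intervalIntegral.integral_sub]
    · apply intervalIntegral.integral_congr
      intro t _
      push_cast
      ring
    · exact (continuous_const.mul ((Complex.continuous_ofReal.comp (by fun_prop)).mul
        (efun_cont c n))).intervalIntegrable _ _
    · exact (continuous_const.mul (efun_cont c n)).intervalIntegrable _ _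
  have hc' : (c : ℂ) ≠ 0 := Complex.ofReal_ne_zero.2 hc
  have main : (∫ t in (0:ℝ)..(2*π), ((Real.sqrt 2 * Real.cos t : ℝ) : ℂ) * efun c n t)
      = (c : ℂ) * n * ∫ t in (0:ℝ)..(2*π), efun c n t := by
    have heq : (Complex.I / c) * (∫ t in (0:ℝ)..(2*π), ((Real.sqrt 2 * Real.cos t : ℝ) : ℂ) * efun c n t)
        = Complex.I * n * ∫ t in (0:ℝ)..(2*π), efun c n t := by
      have h := key
      rw [split] at h
      linear_combination h
    apply mul_left_cancel₀ (show Complex.I / (c:ℂ) ≠ 0 by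
      simp [Complex.I_ne_zero, hc', div_eq_mul_inv])
    rw [heq]
    field_simp
  have point : ∀ t : ℝ, ((Real.sqrt 2 * Real.cos t : ℝ) : ℂ) * efun c n t
      = ((Real.sqrt 2 / 2 : ℝ) : ℂ) * (efun c (n-1) t + efun c (n+1) t) := by
    intro t
    have e1 : efun c (n-1) t = efun c n t * Complex.exp (Complex.I * t) := by
      unfold efun
      rw [← Complex.exp_add]
      congr 1
      push_cast
      ring
    have e2 : efun c (n+1) t = efun c n t * Complex.exp (-(Complex.I * t)) := by
      unfold efun
      rw [← Complex.exp_add]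
      congr 1
      push_cast
      ring
    have tc : Complex.exp ((t:ℂ) * Complex.I) + Complex.exp (-(t:ℂ) * Complex.I)
        = 2 * Complex.cos t := (Complex.two_cos (t:ℂ)).symm
    rw [e1, e2]
    push_cast [Complex.ofReal_cos]
    rw [show Complex.I * (t:ℂ) = (t:ℂ) * Complex.I by ring,
      show -((t:ℂ) * Complex.I) = (-(t:ℂ)) * Complex.I by ring]
    linear_combination (-(Real.sqrt 2 : ℂ)/2) * efun c n t * tc
  have intpoint : (∫ t in (0:ℝ)..(2*π), ((Real.sqrt 2 * Real.cos t : ℝ) : ℂ) * efun c n t)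
      = ((Real.sqrt 2 / 2 : ℝ) : ℂ) * ((∫ t in (0:ℝ)..(2*π), efun c (n-1) t)
          + ∫ t in (0:ℝ)..(2*π), efun c (n+1) t) := by
    rw [intervalIntegral.integral_congr (g := fun t =>
      ((Real.sqrt 2 / 2 : ℝ) : ℂ) * (efun c (n-1) t + efun c (n+1) t)) (fun t _ => point t)]
    rw [intervalIntegral.integral_const_mul,
      intervalIntegral.integral_add ((efun_cont c _).intervalIntegrable _ _)
        ((efun_cont c _).intervalIntegrable _ _)]
  calc (c:ℂ) * n * arcsineFourierCoeff c n
      = ((1 / (2*π) : ℝ) : ℂ) * ((c:ℂ) * n * ∫ t in (0:ℝ)..(2*π), efun c n t) := by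
        rw [acf_eq]; ring
    _ = ((1 / (2*π) : ℝ) : ℂ) * (∫ t in (0:ℝ)..(2*π), ((Real.sqrt 2 * Real.cos t : ℝ) : ℂ) * efun c n t) := by
        rw [main]
    _ = ((1 / (2*π) : ℝ) : ℂ) * (((Real.sqrt 2 / 2 : ℝ) : ℂ) * ((∫ t in (0:ℝ)..(2*π), efun c (n-1) t)
          + ∫ t in (0:ℝ)..(2*π), efun c (n+1) t)) := by rw [intpoint]
    _ = ((Real.sqrt 2 / 2 : ℝ) : ℂ)
          * (arcsineFourierCoeff c (n-1) + arcsineFourierCoeff c (n+1)) := by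
        rw [acf_eq, acf_eq]; ring

section Parseval

variable (c : ℝ)

local instance : Fact (0 < 2 * π) := ⟨by positivity⟩

/-- The function `t ↦ exp(i √2 sin t / c)` as a continuous map on `AddCircle (2π)`. -/
noncomputable def circFun : C(AddCircle (2 * π), ℂ) where
  toFun x := Complex.exp (((Real.sqrt 2 / (2 * c) : ℝ) : ℂ)
    * ((AddCircle.toCircle x : ℂ) - (starRingEnd ℂ) (AddCircle.toCircle x : ℂ)))
  continuous_toFun := by
    apply Complex.continuous_exp.comp
    apply continuous_const.mul
    have h : Continuous fun x : AddCircle (2*π) => (AddCircle.toCircle x : ℂ) :=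
      continuous_induced_dom.comp AddCircle.continuous_toCircle
    exact h.sub (Complex.continuous_conj.comp h)

lemma circFun_coe (t : ℝ) :
    circFun c ((t : ℝ) : AddCircle (2*π))
      = Complex.exp (Complex.I * ((Real.sqrt 2 * Real.sin t / c : ℝ) : ℂ)) := by
  show Complex.exp _ = _
  congr 1
  have h1 : (AddCircle.toCircle ((t : ℝ) : AddCircle (2*π)) : ℂ)
      = Complex.exp ((t:ℂ) * Complex.I) := by
    rw [AddCircle.toCircle_apply_mk, Circle.coe_exp]
    congr 2
    push_cast
    have hπ : (π:ℂ) ≠ 0 := by exact_mod_cast Real.pi_ne_zero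
    field_simp
  have h2 : (starRingEnd ℂ) (Complex.exp ((t:ℂ) * Complex.I))
      = Complex.exp (-(t:ℂ) * Complex.I) := by
    rw [← Complex.exp_conj]
    congr 1
    simp [Complex.conj_ofReal]
  have h3 : Complex.exp ((t:ℂ)*Complex.I) - Complex.exp (-(t:ℂ)*Complex.I)
      = 2 * Complex.sin t * Complex.I := by
    have h := Complex.two_sin (t:ℂ)
    linear_combination (-Complex.I) * h
      + (Complex.exp ((t:ℂ)*Complex.I) - Complex.exp (-(t:ℂ)*Complex.I)) * Complex.I_sq
  rw [h1, h2, h3]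
  push_cast [Complex.ofReal_sin]
  ring

lemma circFun_mul_conj (x : AddCircle (2*π)) :
    (starRingEnd ℂ) (circFun c x) * circFun c x = 1 := by
  show (starRingEnd ℂ) (Complex.exp _) * Complex.exp _ = 1
  rw [← Complex.exp_conj, ← Complex.exp_add]
  rw [show (starRingEnd ℂ) (((Real.sqrt 2 / (2 * c) : ℝ) : ℂ)
        * ((AddCircle.toCircle x : ℂ) - (starRingEnd ℂ) (AddCircle.toCircle x : ℂ)))
      + (((Real.sqrt 2 / (2 * c) : ℝ) : ℂ)
        * ((AddCircle.toCircle x : ℂ) - (starRingEnd ℂ) (AddCircle.toCircle x : ℂ))) = 0 from by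
    simp only [map_mul, map_sub, Complex.conj_conj, Complex.conj_ofReal]
    ring]
  exact Complex.exp_zero

lemma circFun_coeff (n : ℤ) :
    fourierCoeff (⇑(circFun c)) n = arcsineFourierCoeff c n := by
  rw [fourierCoeff_eq_intervalIntegral _ n 0, acf_eq, zero_add]
  rw [intervalIntegral.integral_congr (g := fun t : ℝ => efun c n t)
    (fun t _ => by
      show (fourier (-n) ((t:ℝ) : AddCircle (2*π)) : ℂ) • circFun c ((t:ℝ) : AddCircle (2*π)) = _
      rw [smul_eq_mul, circFun_coe, fourier_coe_apply, ← Complex.exp_add]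
      unfold efun
      congr 1
      have hπ : (π:ℂ) ≠ 0 := by exact_mod_cast Real.pi_ne_zero
      push_cast
      field_simp
      ring)]
  rw [Complex.real_smul]

lemma haar_int_fourier (j : ℤ) :
    (∫ x : AddCircle (2*π), fourier j x ∂haarAddCircle) = if j = 0 then 1 else 0 := by
  have h1 : (∫ x : AddCircle (2*π), fourier j x ∂haarAddCircle)
      = fourierCoeff (fun _ : AddCircle (2*π) => (1:ℂ)) (-j) := by
    unfold fourierCoeff
    simp
  rw [h1, fourierCoeff_eq_intervalIntegral _ _ 0, zero_add]
  rw [intervalIntegral.integral_congr (g := fun t : ℝ => Complex.exp (Complex.I * j * t))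
    (fun t _ => by
      show (fourier (-(-j)) ((t:ℝ) : AddCircle (2*π)) : ℂ) • (1:ℂ) = _
      rw [smul_eq_mul, mul_one, neg_neg, fourier_coe_apply]
      congr 1
      have hπ : (π:ℂ) ≠ 0 := by exact_mod_cast Real.pi_ne_zero
      push_cast
      field_simp)]
  rw [intExp j]
  rcases eq_or_ne j 0 with hj | hj
  · rw [if_pos hj, if_pos hj, Complex.real_smul]
    have hπ : (π:ℂ) ≠ 0 := by exact_mod_cast Real.pi_ne_zero
    push_cast
    field_simp
  · rw [if_neg hj, if_neg hj, smul_zero]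

lemma parseval (k : ℤ) :
    HasSum (fun n : ℤ => (starRingEnd ℂ) (arcsineFourierCoeff c n)
        * arcsineFourierCoeff c (n + k))
      (if k = 0 then 1 else 0) := by
  classical
  set G : C(AddCircle (2*π), ℂ) := fourier (-k) * circFun c with hGdef
  have hGcoeff : ∀ n : ℤ, fourierCoeff (⇑G) n = arcsineFourierCoeff c (n + k) := by
    intro n
    have h1 : fourierCoeff (⇑G) n = fourierCoeff (⇑(circFun c)) (n + k) := by
      unfold fourierCoeff
      apply MeasureTheory.integral_congr_ae
      apply Filter.Eventually.of_forall
      intro x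
      show (fourier (-n) x : ℂ) • (fourier (-k) x * circFun c x)
        = (fourier (-(n+k)) x : ℂ) • circFun c x
      rw [show (-(n+k) : ℤ) = -n + -k by ring, fourier_add, smul_eq_mul, smul_eq_mul]
      ring
    rw [h1, circFun_coeff]
  set u := ContinuousMap.toLp (E := ℂ) 2 haarAddCircle ℂ (circFun c) with hu
  set v := ContinuousMap.toLp (E := ℂ) 2 haarAddCircle ℂ G with hv
  have h := (fourierBasis (T := 2*π)).hasSum_inner_mul_inner u v
  have hval : (inner ℂ u v : ℂ) = if k = 0 then 1 else 0 := by
    rw [hu, hv, ContinuousMap.inner_toLp]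
    rw [MeasureTheory.integral_congr_ae (g := fun x => (fourier (-k) x : ℂ)) (Filter.Eventually.of_forall
      (fun x => by
        show ((fourier (-k) x : ℂ) * circFun c x) * (starRingEnd ℂ) (circFun c x) = _
        calc ((fourier (-k) x : ℂ) * circFun c x) * (starRingEnd ℂ) (circFun c x)
            = (fourier (-k) x : ℂ) * ((starRingEnd ℂ) (circFun c x) * circFun c x) := by ring
          _ = (fourier (-k) x : ℂ) := by rw [circFun_mul_conj, mul_one]))]
    rw [haar_int_fourier (-k)]
    simp [neg_eq_zero]
  have hterm : ∀ i : ℤ, (inner ℂ u (fourierBasis (T := 2*π) i) : ℂ)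
      * (inner ℂ (fourierBasis (T := 2*π) i) v : ℂ)
      = (starRingEnd ℂ) (arcsineFourierCoeff c i) * arcsineFourierCoeff c (i + k) := by
    intro i
    have e1 : (inner ℂ (fourierBasis (T := 2*π) i) v : ℂ) = arcsineFourierCoeff c (i + k) := by
      rw [← HilbertBasis.repr_apply_apply, fourierBasis_repr, fourierCoeff_toLp, hGcoeff]
    have e2 : (inner ℂ u (fourierBasis (T := 2*π) i) : ℂ)
        = (starRingEnd ℂ) (arcsineFourierCoeff c i) := by
      rw [← inner_conj_symm]
      congr 1
      rw [← HilbertBasis.repr_apply_apply, fourierBasis_repr, fourierCoeff_toLp, circFun_coeff]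
    rw [e1, e2]
  rw [hval] at h
  rw [show (fun n : ℤ => (starRingEnd ℂ) (arcsineFourierCoeff c n)
      * arcsineFourierCoeff c (n + k)) = fun i : ℤ => (inner ℂ u (fourierBasis (T := 2*π) i) : ℂ)
      * (inner ℂ (fourierBasis (T := 2*π) i) v : ℂ) from funext (fun i => (hterm i).symm)]
  exact h

end Parseval

/-- Coefficients of the operator `(c·n)^m` expressed in terms of shifts. -/
noncomputable def pcoef (c : ℝ) : ℕ → ℤ → ℂ
  | 0, k => if k = 0 then 1 else 0
  | (m+1), k => ((Real.sqrt 2 / 2 : ℝ) : ℂ) * (pcoef c m (k+1) + pcoef c m (k-1))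
      - (c : ℂ) * (k : ℂ) * pcoef c m k

lemma pcoef_support (c : ℝ) : ∀ (m : ℕ) (k : ℤ), (m : ℤ) < |k| → pcoef c m k = 0 := by
  intro m
  induction m with
  | zero =>
    intro k hk
    have : k ≠ 0 := by
      intro h; rw [h] at hk; simp at hk
    simp [pcoef, this]
  | succ m ih =>
    intro k hk
    have h1 : |k + 1| ≥ |k| - 1 := by
      have := abs_add_le (k+1) (-1)
      simp at this
      omega
    have h2 : |k - 1| ≥ |k| - 1 := by
      have := abs_add_le (k-1) 1
      simp at this
      omega
    have hm : ((m : ℕ) : ℤ) + 1 < |k| := by push_cast at hk ⊢; omega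
    rw [pcoef, ih (k+1) (by omega), ih (k-1) (by omega), ih k (by omega)]
    simp

lemma pcoef_continuous (m : ℕ) (k : ℤ) : Continuous fun c : ℝ => pcoef c m k := by
  induction m generalizing k with
  | zero => simp only [pcoef]; exact continuous_const
  | succ m ih =>
    simp only [pcoef]
    exact (continuous_const.mul ((ih (k+1)).add (ih (k-1)))).sub
      (((Complex.continuous_ofReal).mul continuous_const).mul (ih k))

lemma summable_support (M : ℕ) (f : ℤ → ℂ) (h : ∀ k : ℤ, (M : ℤ) < |k| → f k = 0) :
    Summable f := by
  apply summable_of_ne_finset_zero (s := Finset.Icc (-(M:ℤ)) M)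
  intro k hk
  rw [Finset.mem_Icc] at hk
  exact h k (by rw [lt_abs]; omega)

lemma abs_le_of_pcoef {m : ℕ} {k : ℤ} (h : ¬ ((m:ℤ) < |k|)) : True := trivial

/-- Main identity: `(cn)^m a_n` as a finite combination of shifted coefficients. -/
lemma moment_expand {c : ℝ} (hc : c ≠ 0) (m : ℕ) (n : ℤ) :
    ((c : ℂ) * n) ^ m * arcsineFourierCoeff c n
      = ∑' k : ℤ, pcoef c m k * arcsineFourierCoeff c (n + k) := by
  induction m generalizing n with
  | zero =>
    rw [pow_zero, one_mul, tsum_eq_single 0 (by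
      intro k hk
      rw [show pcoef c 0 k = 0 from by simp [pcoef, hk], zero_mul])]
    simp [pcoef]
  | succ m ih =>
    have hstep : ∀ k : ℤ, (c:ℂ) * n * (pcoef c m k * arcsineFourierCoeff c (n+k))
        = ((Real.sqrt 2 / 2 : ℝ) : ℂ) * (pcoef c m k * arcsineFourierCoeff c (n+k-1))
          + (((Real.sqrt 2 / 2 : ℝ) : ℂ) * (pcoef c m k * arcsineFourierCoeff c (n+k+1))
            - (c:ℂ) * k * pcoef c m k * arcsineFourierCoeff c (n+k)) := by
      intro k
      have h := recursion hc (n+k)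
      have hnk : ((n : ℂ) + k) = ((n+k : ℤ) : ℂ) := by push_cast; ring
      calc (c:ℂ) * n * (pcoef c m k * arcsineFourierCoeff c (n+k))
          = pcoef c m k * ((c:ℂ) * ((n+k : ℤ):ℂ) * arcsineFourierCoeff c (n+k))
            - (c:ℂ) * k * pcoef c m k * arcsineFourierCoeff c (n+k) := by
            push_cast; ring
        _ = _ := by
            rw [h]
            rw [show (n+k-1 : ℤ) = (n+k) - 1 from rfl, show (n+k+1 : ℤ) = (n+k) + 1 from rfl]
            ring
    calc ((c : ℂ) * n) ^ (m+1) * arcsineFourierCoeff c n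
        = (c:ℂ) * n * (((c : ℂ) * n) ^ m * arcsineFourierCoeff c n) := by ring
      _ = (c:ℂ) * n * ∑' k : ℤ, pcoef c m k * arcsineFourierCoeff c (n + k) := by rw [ih]
      _ = ∑' k : ℤ, (c:ℂ) * n * (pcoef c m k * arcsineFourierCoeff c (n + k)) := by
          rw [tsum_mul_left]
      _ = ∑' k : ℤ, (((Real.sqrt 2 / 2 : ℝ) : ℂ) * (pcoef c m k * arcsineFourierCoeff c (n+k-1))
          + (((Real.sqrt 2 / 2 : ℝ) : ℂ) * (pcoef c m k * arcsineFourierCoeff c (n+k+1))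
            - (c:ℂ) * k * pcoef c m k * arcsineFourierCoeff c (n+k))) := by
          exact tsum_congr hstep
      _ = (∑' k : ℤ, ((Real.sqrt 2 / 2 : ℝ) : ℂ) * (pcoef c m k * arcsineFourierCoeff c (n+k-1)))
          + ((∑' k : ℤ, ((Real.sqrt 2 / 2 : ℝ) : ℂ) * (pcoef c m k * arcsineFourierCoeff c (n+k+1)))
            - ∑' k : ℤ, (c:ℂ) * k * pcoef c m k * arcsineFourierCoeff c (n+k)) := by
          have s1 : Summable (fun k : ℤ => ((Real.sqrt 2 / 2 : ℝ) : ℂ)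
              * (pcoef c m k * arcsineFourierCoeff c (n+k-1))) :=
            summable_support m _ (fun k hk => by rw [pcoef_support c m k hk]; simp)
          have s2 : Summable (fun k : ℤ => ((Real.sqrt 2 / 2 : ℝ) : ℂ)
              * (pcoef c m k * arcsineFourierCoeff c (n+k+1))) :=
            summable_support m _ (fun k hk => by rw [pcoef_support c m k hk]; simp)
          have s3 : Summable (fun k : ℤ => (c:ℂ) * k * pcoef c m k
              * arcsineFourierCoeff c (n+k)) :=
            summable_support m _ (fun k hk => by rw [pcoef_support c m k hk]; simp)
          rw [Summable.tsum_add s1 (s2.sub s3), Summable.tsum_sub s2 s3]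
      _ = (∑' k : ℤ, ((Real.sqrt 2 / 2 : ℝ) : ℂ) * (pcoef c m (k+1) * arcsineFourierCoeff c (n+k)))
          + ((∑' k : ℤ, ((Real.sqrt 2 / 2 : ℝ) : ℂ) * (pcoef c m (k-1) * arcsineFourierCoeff c (n+k)))
            - ∑' k : ℤ, (c:ℂ) * k * pcoef c m k * arcsineFourierCoeff c (n+k)) := by
          have r1 := (Equiv.addRight (1:ℤ)).tsum_eq
            (f := fun k : ℤ => ((Real.sqrt 2 / 2 : ℝ) : ℂ)
              * (pcoef c m k * arcsineFourierCoeff c (n+k-1)))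
          have r2 := (Equiv.subRight (1:ℤ)).tsum_eq
            (f := fun k : ℤ => ((Real.sqrt 2 / 2 : ℝ) : ℂ)
              * (pcoef c m k * arcsineFourierCoeff c (n+k+1)))
          simp only [Equiv.coe_addRight, Equiv.subRight_apply] at r1 r2
          have e1 : ∀ j : ℤ, n + (j+1) - 1 = n + j := fun j => by ring
          have e2 : ∀ j : ℤ, n + (j-1) + 1 = n + j := fun j => by ring
          simp only [e1] at r1
          simp only [e2] at r2
          rw [← r1, ← r2]
      _ = ∑' k : ℤ, (((Real.sqrt 2 / 2 : ℝ) : ℂ) * (pcoef c m (k+1) * arcsineFourierCoeff c (n+k))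
          + (((Real.sqrt 2 / 2 : ℝ) : ℂ) * (pcoef c m (k-1) * arcsineFourierCoeff c (n+k))
            - (c:ℂ) * k * pcoef c m k * arcsineFourierCoeff c (n+k))) := by
          have s1 : Summable (fun k : ℤ => ((Real.sqrt 2 / 2 : ℝ) : ℂ)
              * (pcoef c m (k+1) * arcsineFourierCoeff c (n+k))) :=
            summable_support (m+1) _ (fun k hk => by
              rw [pcoef_support c m (k+1) (by
                have := abs_add_le (k+1) (-1)
                simp at this
                push_cast at hk ⊢
                omega)]
              simp)
          have s2 : Summable (fun k : ℤ => ((Real.sqrt 2 / 2 : ℝ) : ℂ)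
              * (pcoef c m (k-1) * arcsineFourierCoeff c (n+k))) :=
            summable_support (m+1) _ (fun k hk => by
              rw [pcoef_support c m (k-1) (by
                have := abs_add_le (k-1) 1
                simp at this
                push_cast at hk ⊢
                omega)]
              simp)
          have s3 : Summable (fun k : ℤ => (c:ℂ) * k * pcoef c m k
              * arcsineFourierCoeff c (n+k)) :=
            summable_support m _ (fun k hk => by rw [pcoef_support c m k hk]; simp)
          rw [Summable.tsum_add s1 (s2.sub s3), Summable.tsum_sub s2 s3]
      _ = ∑' k : ℤ, pcoef c (m+1) k * arcsineFourierCoeff c (n + k) := by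
          apply tsum_congr
          intro k
          show _ = pcoef c (m+1) k * _
          simp only [pcoef]
          ring

lemma moment_hasSum {c : ℝ} (hc : c ≠ 0) (m : ℕ) :
    HasSum (fun n : ℤ => (c * (n:ℝ)) ^ m * ‖arcsineFourierCoeff c n‖ ^ 2)
      (pcoef c m 0).re := by
  classical
  set a := arcsineFourierCoeff c with ha
  have hC : HasSum (fun n : ℤ => ∑ k ∈ Finset.Icc (-(m:ℤ)) m,
      pcoef c m k * ((starRingEnd ℂ) (a n) * a (n+k)))
      (∑ k ∈ Finset.Icc (-(m:ℤ)) m, pcoef c m k * (if k = 0 then 1 else 0)) := by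
    apply hasSum_sum
    intro k _
    exact (parseval c k).mul_left _
  have hval : (∑ k ∈ Finset.Icc (-(m:ℤ)) m, pcoef c m k * (if k = 0 then 1 else 0))
      = pcoef c m 0 := by
    rw [Finset.sum_eq_single 0]
    · simp
    · intro k _ hk
      simp [hk]
    · intro h0
      exfalso
      exact h0 (by simp [Finset.mem_Icc])
  have hterm : ∀ n : ℤ,
      ∑ k ∈ Finset.Icc (-(m:ℤ)) m, pcoef c m k * ((starRingEnd ℂ) (a n) * a (n+k))
      = (((c * (n:ℝ)) ^ m * ‖a n‖ ^ 2 : ℝ) : ℂ) := by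
    intro n
    have h1 : (((c * (n:ℝ)) ^ m * ‖a n‖ ^ 2 : ℝ) : ℂ)
        = ((c:ℂ) * n) ^ m * a n * (starRingEnd ℂ) (a n) := by
      rw [show ((c:ℂ)*n)^m * a n * (starRingEnd ℂ) (a n)
          = ((c:ℂ)*n)^m * (a n * (starRingEnd ℂ) (a n)) by ring, Complex.mul_conj]
      rw [Complex.normSq_eq_norm_sq]
      push_cast
      ring
    have h2 : ((c:ℂ) * n) ^ m * a n * (starRingEnd ℂ) (a n)
        = ∑' k : ℤ, pcoef c m k * a (n+k) * (starRingEnd ℂ) (a n) := by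
      rw [ha, moment_expand hc m n, tsum_mul_right]
    have h3 : (∑' k : ℤ, pcoef c m k * a (n+k) * (starRingEnd ℂ) (a n))
        = ∑ k ∈ Finset.Icc (-(m:ℤ)) m, pcoef c m k * a (n+k) * (starRingEnd ℂ) (a n) := by
      apply tsum_eq_sum
      intro k hk
      rw [Finset.mem_Icc] at hk
      rw [pcoef_support c m k (by rw [lt_abs]; omega), zero_mul, zero_mul]
    rw [h1, h2, h3]
    apply Finset.sum_congr rfl
    intro k _
    ring
  rw [hval] at hC
  rw [show (fun n : ℤ => ∑ k ∈ Finset.Icc (-(m:ℤ)) m,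
      pcoef c m k * ((starRingEnd ℂ) (a n) * a (n+k)))
      = fun n : ℤ => (((c * (n:ℝ)) ^ m * ‖a n‖ ^ 2 : ℝ) : ℂ) from funext hterm] at hC
  have := ((Complex.hasSum_iff _ _).mp hC).1
  simpa only [Complex.ofReal_re] using this

lemma sqrt2_pos : (0:ℝ) < Real.sqrt 2 := Real.sqrt_pos.2 (by norm_num)
lemma sqrt2_sq : Real.sqrt 2 * Real.sqrt 2 = 2 := Real.mul_self_sqrt (by norm_num)
lemma one_le_sqrt2 : (1:ℝ) ≤ Real.sqrt 2 := by
  nlinarith [sqrt2_sq, sqrt2_pos]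

lemma meas_aux : Measurable (fun x : ℝ => 1 / Real.sqrt (2 - x^2)) := by
  apply Measurable.div measurable_const
  exact Real.continuous_sqrt.measurable.comp (by fun_prop)

lemma sqrt_int_right : IntervalIntegrable (fun x : ℝ => 1 / Real.sqrt (2 - x^2))
    volume 0 (Real.sqrt 2) := by
  have hbase : IntervalIntegrable (fun x : ℝ => x ^ (-(1/2) : ℝ)) volume 0 (Real.sqrt 2) :=
    intervalIntegrable_rpow' (by norm_num)
  have hcomp : IntervalIntegrable (fun x : ℝ => (Real.sqrt 2 - x) ^ (-(1/2) : ℝ))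
      volume 0 (Real.sqrt 2) := by
    have := (hbase.comp_sub_left (Real.sqrt 2)).symm
    simpa using this
  apply hcomp.mono_fun meas_aux.aestronglyMeasurable
  rw [Set.uIoc_of_le sqrt2_pos.le]
  filter_upwards [ae_restrict_mem measurableSet_Ioc] with x hx
  have hx0 : 0 < x := hx.1
  have hx2 : x ≤ Real.sqrt 2 := hx.2
  have hsub : (0:ℝ) ≤ Real.sqrt 2 - x := by linarith
  have hrw : (Real.sqrt 2 - x) ^ (-(1/2) : ℝ) = 1 / Real.sqrt (Real.sqrt 2 - x) := by
    rw [Real.rpow_neg hsub, ← Real.sqrt_eq_rpow, one_div]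
  have h1 : (0:ℝ) ≤ 1 / Real.sqrt (2 - x^2) := by positivity
  have h2 : (0:ℝ) ≤ (Real.sqrt 2 - x) ^ (-(1/2) : ℝ) := Real.rpow_nonneg hsub _
  rw [Real.norm_eq_abs, Real.norm_eq_abs, _root_.abs_of_nonneg h1, _root_.abs_of_nonneg h2, hrw]
  rcases eq_or_lt_of_le hx2 with heq | hlt
  · subst heq
    have h0 : (2:ℝ) - Real.sqrt 2 ^ 2 = 0 := by nlinarith [sqrt2_sq]
    rw [h0, sub_self]
  · have hle : Real.sqrt (Real.sqrt 2 - x) ≤ Real.sqrt (2 - x^2) := by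
      apply Real.sqrt_le_sqrt
      nlinarith [sqrt2_sq, one_le_sqrt2]
    have hpos : 0 < Real.sqrt (Real.sqrt 2 - x) := Real.sqrt_pos.2 (by linarith)
    exact one_div_le_one_div_of_le hpos hle

lemma sqrt_int_left : IntervalIntegrable (fun x : ℝ => 1 / Real.sqrt (2 - x^2))
    volume (-(Real.sqrt 2)) 0 := by
  have hbase : IntervalIntegrable (fun x : ℝ => x ^ (-(1/2) : ℝ)) volume 0 (Real.sqrt 2) :=
    intervalIntegrable_rpow' (by norm_num)
  have hcomp : IntervalIntegrable (fun x : ℝ => (x + Real.sqrt 2) ^ (-(1/2) : ℝ))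
      volume (-(Real.sqrt 2)) 0 := by
    have := hbase.comp_add_right (Real.sqrt 2)
    simpa using this
  apply hcomp.mono_fun meas_aux.aestronglyMeasurable
  rw [Set.uIoc_of_le (by linarith [sqrt2_pos])]
  filter_upwards [ae_restrict_mem measurableSet_Ioc] with x hx
  have hx0 : -(Real.sqrt 2) < x := hx.1
  have hx2 : x ≤ 0 := hx.2
  have hsub : (0:ℝ) < x + Real.sqrt 2 := by linarith
  have hrw : (x + Real.sqrt 2) ^ (-(1/2) : ℝ) = 1 / Real.sqrt (x + Real.sqrt 2) := by
    rw [Real.rpow_neg hsub.le, ← Real.sqrt_eq_rpow, one_div]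
  have h1 : (0:ℝ) ≤ 1 / Real.sqrt (2 - x^2) := by positivity
  have h2 : (0:ℝ) ≤ (x + Real.sqrt 2) ^ (-(1/2) : ℝ) := Real.rpow_nonneg hsub.le _
  rw [Real.norm_eq_abs, Real.norm_eq_abs, _root_.abs_of_nonneg h1, _root_.abs_of_nonneg h2, hrw]
  have hle : Real.sqrt (x + Real.sqrt 2) ≤ Real.sqrt (2 - x^2) := by
    apply Real.sqrt_le_sqrt
    nlinarith [sqrt2_sq, one_le_sqrt2]
  have hpos : 0 < Real.sqrt (x + Real.sqrt 2) := Real.sqrt_pos.2 hsub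
  exact one_div_le_one_div_of_le hpos hle

lemma sqrt_int : IntervalIntegrable (fun x : ℝ => 1 / Real.sqrt (2 - x^2))
    volume (-(Real.sqrt 2)) (Real.sqrt 2) :=
  sqrt_int_left.trans sqrt_int_right

lemma pow_sqrt_int (m : ℕ) :
    IntervalIntegrable (fun x : ℝ => x^m / Real.sqrt (2 - x^2))
      volume (-(Real.sqrt 2)) (Real.sqrt 2) := by
  apply IntervalIntegrable.mono_fun' (g := fun x => (Real.sqrt 2)^m * (1 / Real.sqrt (2 - x^2)))
    (sqrt_int.const_mul _)
  · apply Measurable.aestronglyMeasurable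
    apply Measurable.div (by fun_prop)
    exact Real.continuous_sqrt.measurable.comp (by fun_prop)
  · rw [Set.uIoc_of_le (by linarith [sqrt2_pos])]
    filter_upwards [ae_restrict_mem measurableSet_Ioc] with x hx
    have hxabs : |x| ≤ Real.sqrt 2 := abs_le.2 ⟨hx.1.le, hx.2⟩
    have hs : (0:ℝ) ≤ Real.sqrt (2 - x^2) := Real.sqrt_nonneg _
    rw [Real.norm_eq_abs, abs_div, _root_.abs_of_nonneg hs]
    rcases eq_or_lt_of_le hs with heq | hpos
    · rw [← heq, div_zero]
      positivity
    · rw [div_le_iff₀ hpos]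
      have he : (Real.sqrt 2)^m * (1 / Real.sqrt (2 - x^2)) * Real.sqrt (2 - x^2)
          = (Real.sqrt 2)^m := by field_simp
      rw [he, _root_.abs_pow]
      exact pow_le_pow_left₀ (abs_nonneg x) hxabs m

/-- Recursive antiderivative of `x^m / sqrt (2 - x^2)`. -/
noncomputable def Hfun : ℕ → ℝ → ℝ
  | 0, x => Real.arcsin (x / Real.sqrt 2)
  | 1, x => -Real.sqrt (2 - x^2)
  | (m+2), x => -(x^(m+1) * Real.sqrt (2 - x^2)) / ((m:ℝ)+2)
      + (2*((m:ℝ)+1)/((m:ℝ)+2)) * Hfun m x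

lemma Hfun_cont : ∀ m, Continuous (Hfun m) := by
  intro m
  induction m using Nat.strong_induction_on with
  | _ m ih =>
    match m with
    | 0 =>
      show Continuous fun x => Real.arcsin (x / Real.sqrt 2)
      exact Real.continuous_arcsin.comp (by fun_prop)
    | 1 =>
      show Continuous fun x => -Real.sqrt (2 - x^2)
      exact (Real.continuous_sqrt.comp (by fun_prop)).neg
    | (m+2) =>
      show Continuous fun x => -(x^(m+1) * Real.sqrt (2 - x^2)) / ((m:ℝ)+2)
        + (2*((m:ℝ)+1)/((m:ℝ)+2)) * Hfun m x
      exact ((((continuous_pow (m+1)).mul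
        (Real.continuous_sqrt.comp (by fun_prop))).neg.div_const _)).add
        (continuous_const.mul (ih m (by omega)))

lemma Hfun_deriv : ∀ m, ∀ x ∈ Set.Ioo (-(Real.sqrt 2)) (Real.sqrt 2),
    HasDerivAt (Hfun m) (x^m / Real.sqrt (2 - x^2)) x := by
  intro m
  induction m using Nat.strong_induction_on with
  | _ m ih =>
    intro x hx
    have hx2 : x^2 < 2 := by nlinarith [sqrt2_sq, hx.1, hx.2]
    have hpos : (0:ℝ) < 2 - x^2 := by linarith
    have hsq : (0:ℝ) < Real.sqrt (2 - x^2) := Real.sqrt_pos.2 hpos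
    have hS : Real.sqrt (2 - x^2) ^ 2 = 2 - x^2 := Real.sq_sqrt hpos.le
    have hinner : HasDerivAt (fun x : ℝ => 2 - x^2) (-(2*x)) x := by
      have := ((hasDerivAt_pow 2 x).const_sub 2)
      simpa using this
    have hsqrtD : HasDerivAt (fun x : ℝ => Real.sqrt (2 - x^2))
        (-(2*x) / (2 * Real.sqrt (2 - x^2))) x := hinner.sqrt (by linarith)
    match m with
    | 0 =>
      have hs2 : (0:ℝ) < Real.sqrt 2 := sqrt2_pos
      have hlt : x / Real.sqrt 2 < 1 := (div_lt_one hs2).2 hx.2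
      have hgt : -1 < x / Real.sqrt 2 := by
        rw [lt_div_iff₀ hs2]
        nlinarith [hx.1]
      have harc := (Real.hasDerivAt_arcsin (ne_of_gt hgt) (ne_of_lt hlt)).comp x
        ((hasDerivAt_id x).div_const (Real.sqrt 2))
      have harg : (1:ℝ) - (x / Real.sqrt 2)^2 = (2 - x^2) / 2 := by
        rw [div_pow]
        rw [show Real.sqrt 2 ^ 2 = 2 by rw [sq]; exact sqrt2_sq]
        ring
      have hval : 1 / Real.sqrt (1 - (x / Real.sqrt 2)^2) * (1 / Real.sqrt 2)
          = x^0 / Real.sqrt (2 - x^2) := by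
        rw [harg, Real.sqrt_div hpos.le, pow_zero]
        field_simp
      show HasDerivAt (fun x => Real.arcsin (x / Real.sqrt 2)) (x^0 / Real.sqrt (2-x^2)) x
      rw [← hval]
      exact harc
    | 1 =>
      show HasDerivAt (fun x => -Real.sqrt (2 - x^2)) (x^1 / Real.sqrt (2-x^2)) x
      have : HasDerivAt (fun x => -Real.sqrt (2 - x^2)) (-(-(2*x) / (2 * Real.sqrt (2 - x^2)))) x :=
        hsqrtD.neg
      convert this using 1
      field_simp
    | (m+2) =>
      show HasDerivAt (fun x => -(x^(m+1) * Real.sqrt (2 - x^2)) / ((m:ℝ)+2)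
        + (2*((m:ℝ)+1)/((m:ℝ)+2)) * Hfun m x) (x^(m+2) / Real.sqrt (2-x^2)) x
      have h1 : HasDerivAt (fun x : ℝ => -(x^(m+1) * Real.sqrt (2 - x^2)) / ((m:ℝ)+2))
          (-((↑(m+1) * x^m) * Real.sqrt (2 - x^2)
            + x^(m+1) * (-(2*x) / (2 * Real.sqrt (2 - x^2)))) / ((m:ℝ)+2)) x := by
        exact (((hasDerivAt_pow (m+1) x).mul hsqrtD).neg).div_const _
      have h2 : HasDerivAt (fun x : ℝ => (2*((m:ℝ)+1)/((m:ℝ)+2)) * Hfun m x)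
          ((2*((m:ℝ)+1)/((m:ℝ)+2)) * (x^m / Real.sqrt (2 - x^2))) x :=
        (ih m (by omega) x hx).const_mul _
      have : HasDerivAt (fun x => -(x^(m+1) * Real.sqrt (2 - x^2)) / ((m:ℝ)+2)
          + (2*((m:ℝ)+1)/((m:ℝ)+2)) * Hfun m x) _ x := h1.add h2
      convert this using 1
      have hm2 : ((m:ℝ)+2) ≠ 0 := by positivity
      have h4 : Real.sqrt (2-x^2)^4 = (2-x^2)^2 := by
        rw [show (4:ℕ) = 2*2 from rfl, pow_mul, hS]
      field_simp
      ring_nf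
      simp only [h4, hS]
      push_cast
      ring

lemma sqrt_at_end : Real.sqrt (2 - (Real.sqrt 2)^2) = 0 := by
  rw [show (2:ℝ) - (Real.sqrt 2)^2 = 0 by nlinarith [sqrt2_sq]]
  exact Real.sqrt_zero

lemma sqrt_at_end' : Real.sqrt (2 - (-(Real.sqrt 2))^2) = 0 := by
  rw [neg_sq]
  exact sqrt_at_end

noncomputable def Imom (m : ℕ) : ℝ :=
  ∫ x in (-Real.sqrt 2)..(Real.sqrt 2), x ^ m / (Real.pi * Real.sqrt (2 - x ^ 2))

lemma Imom_eq (m : ℕ) :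
    Imom m = (Hfun m (Real.sqrt 2) - Hfun m (-(Real.sqrt 2))) / π := by
  have hftc : (∫ x in (-(Real.sqrt 2))..(Real.sqrt 2), x^m / Real.sqrt (2 - x^2))
      = Hfun m (Real.sqrt 2) - Hfun m (-(Real.sqrt 2)) :=
    intervalIntegral.integral_eq_sub_of_hasDerivAt_of_le (by linarith [sqrt2_pos])
      (Hfun_cont m).continuousOn (fun x hx => Hfun_deriv m x hx) (pow_sqrt_int m)
  have h2 : Imom m = (1/π) * ∫ x in (-(Real.sqrt 2))..(Real.sqrt 2), x^m / Real.sqrt (2 - x^2) := by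
    rw [Imom, ← intervalIntegral.integral_const_mul]
    apply intervalIntegral.integral_congr
    intro x _
    ring
  rw [h2, hftc]
  ring

lemma Imom_zero : Imom 0 = 1 := by
  rw [Imom_eq]
  show (Real.arcsin (Real.sqrt 2 / Real.sqrt 2) - Real.arcsin (-(Real.sqrt 2) / Real.sqrt 2)) / π = 1
  rw [div_self sqrt2_pos.ne', neg_div, div_self sqrt2_pos.ne', Real.arcsin_neg, Real.arcsin_one]
  field_simp
  norm_num

lemma Imom_one : Imom 1 = 0 := by
  rw [Imom_eq]
  show (-Real.sqrt (2 - (Real.sqrt 2)^2) - -Real.sqrt (2 - (-(Real.sqrt 2))^2)) / π = 0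
  rw [sqrt_at_end, sqrt_at_end']
  simp

lemma Imom_rec (m : ℕ) : Imom (m+2) = (2*((m:ℝ)+1)/((m:ℝ)+2)) * Imom m := by
  rw [Imom_eq, Imom_eq]
  show ((-((Real.sqrt 2)^(m+1) * Real.sqrt (2 - (Real.sqrt 2)^2)) / ((m:ℝ)+2)
      + (2*((m:ℝ)+1)/((m:ℝ)+2)) * Hfun m (Real.sqrt 2))
    - (-((-(Real.sqrt 2))^(m+1) * Real.sqrt (2 - (-(Real.sqrt 2))^2)) / ((m:ℝ)+2)
      + (2*((m:ℝ)+1)/((m:ℝ)+2)) * Hfun m (-(Real.sqrt 2)))) / π = _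
  rw [sqrt_at_end, sqrt_at_end']
  ring

noncomputable def Rmom (m : ℕ) : ℝ :=
  (1/(2*π)) * ∫ t in (0:ℝ)..(2*π), (Real.sqrt 2 * Real.cos t)^m

lemma Rmom_zero : Rmom 0 = 1 := by
  unfold Rmom
  simp only [pow_zero]
  rw [intervalIntegral.integral_const]
  simp
  field_simp

lemma Rmom_one : Rmom 1 = 0 := by
  unfold Rmom
  simp only [pow_one]
  rw [intervalIntegral.integral_const_mul, integral_cos]
  simp [Real.sin_two_pi]

lemma Rmom_rec (m : ℕ) : Rmom (m+2) = (2*((m:ℝ)+1)/((m:ℝ)+2)) * Rmom m := by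
  have hpow : ∀ j : ℕ, (∫ t in (0:ℝ)..(2*π), (Real.sqrt 2 * Real.cos t)^j)
      = (Real.sqrt 2)^j * ∫ t in (0:ℝ)..(2*π), (Real.cos t)^j := by
    intro j
    rw [← intervalIntegral.integral_const_mul]
    apply intervalIntegral.integral_congr
    intro t _
    simp only [mul_pow]
  have hcos := integral_cos_pow (a := 0) (b := 2*π) (n := m)
  rw [Real.sin_two_pi, Real.sin_zero] at hcos
  simp only [mul_zero, sub_zero, zero_div, zero_add] at hcos
  unfold Rmom
  rw [hpow, hpow, hcos]
  have h2 : (Real.sqrt 2)^(m+2) = 2 * (Real.sqrt 2)^m := by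
    rw [pow_succ, pow_succ, mul_assoc, sqrt2_sq]
    ring
  rw [h2]
  ring

lemma moms_eq : ∀ m, Rmom m = Imom m := by
  have : ∀ m, Rmom m = Imom m ∧ Rmom (m+1) = Imom (m+1) := by
    intro m
    induction m with
    | zero => exact ⟨by rw [Rmom_zero, Imom_zero], by rw [Rmom_one, Imom_one]⟩
    | succ m ih => exact ⟨ih.2, by rw [Rmom_rec, Imom_rec, ih.1]⟩
  exact fun m => (this m).1

noncomputable def Kint (m : ℕ) (k : ℤ) : ℂ :=
  ((1 / (2*π) : ℝ) : ℂ) * ∫ t in (0:ℝ)..(2*π),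
    ((Real.sqrt 2 * Real.cos t : ℝ) : ℂ) ^ m * Complex.exp (-(Complex.I * k * t))

lemma Kint_zero (k : ℤ) : Kint 0 k = if k = 0 then 1 else 0 := by
  unfold Kint
  rw [intervalIntegral.integral_congr (g := fun t : ℝ => Complex.exp (Complex.I * ((-k : ℤ) : ℂ) * t))
    (fun t _ => by rw [pow_zero, one_mul]; congr 1; push_cast; ring)]
  rw [intExp (-k)]
  rcases eq_or_ne k 0 with hk | hk
  · rw [if_pos (by simp [hk]), if_pos hk]
    have hπ : (π:ℂ) ≠ 0 := by exact_mod_cast Real.pi_ne_zero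
    push_cast
    field_simp
  · rw [if_neg (by simp [hk]), if_neg hk, mul_zero]

lemma Kint_succ (m : ℕ) (k : ℤ) :
    Kint (m+1) k = ((Real.sqrt 2 / 2 : ℝ) : ℂ) * (Kint m (k+1) + Kint m (k-1)) := by
  unfold Kint
  rw [show ((Real.sqrt 2 / 2 : ℝ) : ℂ) * ((((1 / (2*π) : ℝ) : ℂ) * ∫ t in (0:ℝ)..(2*π),
      ((Real.sqrt 2 * Real.cos t : ℝ) : ℂ) ^ m * Complex.exp (-(Complex.I * (k+1:ℤ) * t)))
    + (((1 / (2*π) : ℝ) : ℂ) * ∫ t in (0:ℝ)..(2*π),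
      ((Real.sqrt 2 * Real.cos t : ℝ) : ℂ) ^ m * Complex.exp (-(Complex.I * (k-1:ℤ) * t))))
    = ((1 / (2*π) : ℝ) : ℂ) * (((Real.sqrt 2 / 2 : ℝ) : ℂ)
      * ((∫ t in (0:ℝ)..(2*π),
        ((Real.sqrt 2 * Real.cos t : ℝ) : ℂ) ^ m * Complex.exp (-(Complex.I * (k+1:ℤ) * t)))
       + ∫ t in (0:ℝ)..(2*π),
        ((Real.sqrt 2 * Real.cos t : ℝ) : ℂ) ^ m * Complex.exp (-(Complex.I * (k-1:ℤ) * t))))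
    from by ring]
  congr 1
  rw [← intervalIntegral.integral_add (by apply Continuous.intervalIntegrable; fun_prop)
    (by apply Continuous.intervalIntegrable; fun_prop),
    ← intervalIntegral.integral_const_mul]
  apply intervalIntegral.integral_congr
  intro t _
  have a1 : Complex.exp (-(Complex.I * ((k:ℂ)+1) * t))
      = Complex.exp (-(Complex.I * k * t)) * Complex.exp (-(Complex.I * t)) := by
    rw [← Complex.exp_add]
    congr 1
    ring
  have a2 : Complex.exp (-(Complex.I * ((k:ℂ)-1) * t))
      = Complex.exp (-(Complex.I * k * t)) * Complex.exp (Complex.I * t) := by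
    rw [← Complex.exp_add]
    congr 1
    ring
  have tc : Complex.exp ((t:ℂ) * Complex.I) + Complex.exp (-(t:ℂ) * Complex.I)
      = 2 * Complex.cos t := (Complex.two_cos (t:ℂ)).symm
  push_cast
  rw [a1, a2]
  rw [show Complex.exp (-(Complex.I * (t:ℂ))) = Complex.exp (-(t:ℂ) * Complex.I) by ring_nf,
    show Complex.exp (Complex.I * (t:ℂ)) = Complex.exp ((t:ℂ) * Complex.I) by ring_nf]
  rw [pow_succ]
  linear_combination (-(Real.sqrt 2 : ℂ)/2) * ((Real.sqrt 2 : ℂ) * Complex.cos (t:ℂ))^m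
    * Complex.exp (-(Complex.I * (k:ℂ) * (t:ℂ))) * tc

lemma pcoef_zero_eq (m : ℕ) : ∀ k : ℤ, pcoef 0 m k = Kint m k := by
  induction m with
  | zero =>
    intro k
    rw [Kint_zero]
    simp [pcoef]
  | succ m ih =>
    intro k
    show ((Real.sqrt 2 / 2 : ℝ) : ℂ) * (pcoef 0 m (k+1) + pcoef 0 m (k-1))
      - ((0:ℝ) : ℂ) * (k : ℂ) * pcoef 0 m k = _
    rw [ih, ih, Kint_succ]
    push_cast
    ring

lemma pcoef_zero_re (m : ℕ) : (pcoef 0 m 0).re = Imom m := by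
  rw [pcoef_zero_eq m 0, ← moms_eq]
  unfold Kint Rmom
  rw [intervalIntegral.integral_congr
    (g := fun t : ℝ => (((Real.sqrt 2 * Real.cos t)^m : ℝ) : ℂ)) (fun t _ => by
      push_cast
      simp)]
  rw [intervalIntegral.integral_ofReal, ← Complex.ofReal_mul]
  exact Complex.ofReal_re _

end ArcsineAux

/-- As `c → 0` through nonzero values, the moments of the discrete arcsine law `μ_c`
converge to the moments of the arcsine law. -/
theorem discreteArcsine_moments_tendsto_arcsine (m : ℕ) :
    Tendsto (fun c : ℝ => ∑' n : ℤ, (c * (n : ℝ)) ^ m * ‖arcsineFourierCoeff c n‖ ^ 2)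
      (nhdsWithin 0 {c : ℝ | c ≠ 0})
      (nhds (∫ x in (-Real.sqrt 2)..(Real.sqrt 2), x ^ m / (Real.pi * Real.sqrt (2 - x ^ 2)))) := by
  rw [show (∫ x in (-Real.sqrt 2)..(Real.sqrt 2), x ^ m / (Real.pi * Real.sqrt (2 - x ^ 2)))
    = ArcsineAux.Imom m from rfl, ← ArcsineAux.pcoef_zero_re]
  have h1 : Tendsto (fun c : ℝ => (ArcsineAux.pcoef c m 0).re)
      (nhdsWithin 0 {c : ℝ | c ≠ 0}) (nhds ((ArcsineAux.pcoef 0 m 0).re)) :=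
    ((Complex.continuous_re.comp (ArcsineAux.pcoef_continuous m 0)).tendsto 0).mono_left
      nhdsWithin_le_nhds
  exact tendsto_nhdsWithin_congr
    (fun c hc => ((ArcsineAux.moment_hasSum hc m).tsum_eq).symm) h1
end

section
/- Fix a nonzero real number c. For every natural number m, the 2m-th moment of the discrete arcsine law satisfies Σ_{n∈ℤ} (c·n)^{2m} |a_n(c)|² ≤ (√2 + 2|c|·m)^{2m}. -/
open Complex MeasureTheory intervalIntegral Real Filter AddCircle
open scoped ENNReal



noncomputable def arcf (a : ℝ) (t : ℝ) : ℂ :=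
  Complex.exp (Complex.I * ((a * Real.sin t : ℝ) : ℂ))

noncomputable def arcE (a : ℝ) (n : ℤ) (t : ℝ) : ℂ :=
  arcf a t * Complex.exp (-(Complex.I * (n : ℂ) * (t : ℂ)))

noncomputable def arcA (a : ℝ) (n : ℤ) : ℂ :=
  (1 / (2 * (Real.pi : ℂ))) * ∫ t in (0:ℝ)..(2 * Real.pi), arcE a n t

lemma continuous_arcE (a : ℝ) (n : ℤ) : Continuous (arcE a n) := by
  unfold arcE arcf
  fun_prop

lemma arcE_eq (a : ℝ) (n : ℤ) (t : ℝ) :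
    arcE a n t = Complex.exp (Complex.I * ((a * Real.sin t : ℝ) : ℂ)
      - Complex.I * (n : ℂ) * (t : ℂ)) := by
  rw [arcE, arcf, ← Complex.exp_add]
  ring_nf

lemma hasDerivAt_arcE (a : ℝ) (n : ℤ) (t : ℝ) :
    HasDerivAt (arcE a n)
      ((Complex.I * ((a * Real.cos t : ℝ) : ℂ) - Complex.I * (n : ℂ)) * arcE a n t) t := by
  have h1 : HasDerivAt (fun t : ℝ => a * Real.sin t) (a * Real.cos t) t :=
    (Real.hasDerivAt_sin t).const_mul a
  have h2 : HasDerivAt (fun t : ℝ => ((a * Real.sin t : ℝ) : ℂ))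
      ((a * Real.cos t : ℝ) : ℂ) t := h1.ofReal_comp
  have h3 := h2.const_mul Complex.I
  have h4 : HasDerivAt (fun t : ℝ => (t : ℂ)) 1 t := Complex.ofRealCLM.hasDerivAt
  have h5 := (h4.const_mul (Complex.I * (n : ℂ)))
  have h6 := (h3.sub h5).cexp
  have : ∀ s : ℝ, Complex.exp (Complex.I * ((a * Real.sin s : ℝ) : ℂ)
      - Complex.I * (n : ℂ) * (s : ℂ)) = arcE a n s := fun s => (arcE_eq a n s).symm
  simp only [mul_one, this] at h6
  convert h6 using 1
  · funext s; exact arcE_eq a n s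
  · rw [arcE_eq]; simp only [Pi.sub_apply]; ring

lemma arcE_ptwise (a : ℝ) (n : ℤ) (t : ℝ) :
    Complex.I * ((a * Real.cos t : ℝ) : ℂ) * arcE a n t
      = Complex.I * (a : ℂ) / 2 * (arcE a (n - 1) t + arcE a (n + 1) t) := by
  have hcos : ((Real.cos t : ℝ) : ℂ)
      = (Complex.exp (↑t * Complex.I) + Complex.exp (-↑t * Complex.I)) / 2 := by
    rw [Complex.ofReal_cos, eq_div_iff (two_ne_zero), mul_comm, Complex.two_cos]
  have e1 : arcE a (n - 1) t = arcE a n t * Complex.exp (↑t * Complex.I) := by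
    rw [arcE_eq, arcE_eq, ← Complex.exp_add]; congr 1; push_cast; ring
  have e2 : arcE a (n + 1) t = arcE a n t * Complex.exp (-↑t * Complex.I) := by
    rw [arcE_eq, arcE_eq, ← Complex.exp_add]; congr 1; push_cast; ring
  rw [Complex.ofReal_mul, hcos, e1, e2]; ring

lemma integral_deriv_arcE (a : ℝ) (n : ℤ) :
    (∫ t in (0:ℝ)..(2 * Real.pi),
      (Complex.I * ((a * Real.cos t : ℝ) : ℂ) - Complex.I * (n : ℂ)) * arcE a n t) = 0 := by
  have hint : IntervalIntegrable (fun t : ℝ =>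
      (Complex.I * ((a * Real.cos t : ℝ) : ℂ) - Complex.I * (n : ℂ)) * arcE a n t)
      volume 0 (2 * Real.pi) := by
    apply Continuous.intervalIntegrable
    unfold arcE arcf; fun_prop
  have h := intervalIntegral.integral_eq_sub_of_hasDerivAt
    (f := arcE a n) (fun t _ => hasDerivAt_arcE a n t) hint
  rw [h]
  have h2 : arcE a n (2 * Real.pi) = 1 := by
    rw [arcE_eq]
    have : Complex.I * ((a * Real.sin (2 * Real.pi) : ℝ) : ℂ)
        - Complex.I * (n : ℂ) * ((2 * Real.pi : ℝ) : ℂ)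
        = ((-n : ℤ) : ℂ) * (2 * (Real.pi : ℂ) * Complex.I) := by
      rw [Real.sin_two_pi]; push_cast; ring
    rw [this, Complex.exp_int_mul_two_pi_mul_I]
  have h0 : arcE a n 0 = 1 := by
    rw [arcE_eq]; norm_num
  rw [h2, h0, sub_self]

lemma arcA_rec (a : ℝ) (n : ℤ) :
    (n : ℂ) * arcA a n = (a : ℂ) / 2 * (arcA a (n - 1) + arcA a (n + 1)) := by
  have hI : ∀ k : ℤ, IntervalIntegrable (arcE a k) volume 0 (2 * Real.pi) :=
    fun k => (continuous_arcE a k).intervalIntegrable _ _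
  have hIc : IntervalIntegrable (fun t => Complex.I * ((a * Real.cos t : ℝ) : ℂ) * arcE a n t)
      volume 0 (2 * Real.pi) := by
    apply Continuous.intervalIntegrable
    unfold arcE arcf; fun_prop
  have h := integral_deriv_arcE a n
  simp only [sub_mul] at h
  rw [intervalIntegral.integral_sub hIc (by
    simpa using (hI n).const_mul (Complex.I * (n : ℂ)))] at h
  have hPQ : (∫ t in (0:ℝ)..(2 * Real.pi), Complex.I * ((a * Real.cos t : ℝ) : ℂ) * arcE a n t)
      = Complex.I * (n : ℂ) * ∫ t in (0:ℝ)..(2 * Real.pi), arcE a n t := by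
    have := sub_eq_zero.mp h
    rw [this, ← intervalIntegral.integral_const_mul]
  have hP : (∫ t in (0:ℝ)..(2 * Real.pi), Complex.I * ((a * Real.cos t : ℝ) : ℂ) * arcE a n t)
      = Complex.I * (a : ℂ) / 2 *
        ((∫ t in (0:ℝ)..(2 * Real.pi), arcE a (n - 1) t)
          + ∫ t in (0:ℝ)..(2 * Real.pi), arcE a (n + 1) t) := by
    rw [intervalIntegral.integral_congr (g := fun t =>
      Complex.I * (a : ℂ) / 2 * (arcE a (n - 1) t + arcE a (n + 1) t))
      (fun t _ => arcE_ptwise a n t)]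
    rw [intervalIntegral.integral_const_mul, intervalIntegral.integral_add (hI _) (hI _)]
  apply mul_left_cancel₀ Complex.I_ne_zero
  unfold arcA
  have := hP.symm.trans hPQ
  calc Complex.I * ((n : ℂ) * ((1 / (2 * (Real.pi : ℂ))) * ∫ t in (0:ℝ)..(2 * Real.pi), arcE a n t))
      = (1 / (2 * (Real.pi : ℂ))) * (Complex.I * (n : ℂ) * ∫ t in (0:ℝ)..(2 * Real.pi), arcE a n t) := by ring
    _ = (1 / (2 * (Real.pi : ℂ))) * (Complex.I * (a : ℂ) / 2 *
        ((∫ t in (0:ℝ)..(2 * Real.pi), arcE a (n - 1) t)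
          + ∫ t in (0:ℝ)..(2 * Real.pi), arcE a (n + 1) t)) := by rw [← this]
    _ = Complex.I * ((a : ℂ) / 2 *
        ((1 / (2 * (Real.pi : ℂ))) * (∫ t in (0:ℝ)..(2 * Real.pi), arcE a (n - 1) t)
          + (1 / (2 * (Real.pi : ℂ))) * ∫ t in (0:ℝ)..(2 * Real.pi), arcE a (n + 1) t)) := by ring


set_option maxHeartbeats 800000 in
theorem arcA_parseval (a : ℝ) :
    Summable (fun n : ℤ => ‖arcA a n‖ ^ 2) ∧ (∑' n : ℤ, ‖arcA a n‖ ^ 2) ≤ 1 := by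
  haveI : Fact (0 < 2 * Real.pi) := ⟨by positivity⟩
  have hper : Function.Periodic (arcf a) (2 * Real.pi) := fun t => by
    unfold arcf; rw [Real.sin_add_two_pi]
  have hFc : Continuous hper.lift :=
    Continuous.quotient_liftOn' (by unfold arcf; fun_prop) _
  set F : AddCircle (2 * Real.pi) → ℂ := hper.lift with hFdef
  have hFcoe : ∀ t : ℝ, F ↑t = arcf a t := fun t => hper.lift_coe t
  have hFnorm : ∀ x, ‖F x‖ = 1 := by
    intro x
    induction x using QuotientAddGroup.induction_on with
    | H t => rw [hFdef]; show ‖hper.lift ↑t‖ = 1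
             rw [hper.lift_coe t]
             simp only [arcf]; rw [mul_comm, Complex.norm_exp_ofReal_mul_I]
  have hmem : MemLp F 2 haarAddCircle :=
    MemLp.of_bound hFc.aestronglyMeasurable 1 (Filter.Eventually.of_forall fun x => (hFnorm x).le)
  set G := hmem.toLp F with hG
  have hcoeff : ∀ n : ℤ, fourierCoeff (⇑G) n = arcA a n := by
    intro n
    have h1 : fourierCoeff (⇑G) n = fourierCoeff F n := by
      simp only [fourierCoeff]
      refine integral_congr_ae ((hmem.coeFn_toLp).mono fun x hx => by dsimp only; rw [hx])
    rw [h1, fourierCoeff_eq_intervalIntegral F n 0, zero_add, arcA, Complex.real_smul]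
    congr 1
    · push_cast; norm_num
    · refine intervalIntegral.integral_congr fun t _ => ?_
      rw [smul_eq_mul, fourier_coe_apply, hFcoe, arcE, mul_comm]
      congr 1
      have hpi : ((Real.pi : ℝ) : ℂ) ≠ 0 := Complex.ofReal_ne_zero.mpr Real.pi_ne_zero
      push_cast
      field_simp
  have hrepr : ∀ n : ℤ, fourierBasis.repr G n = arcA a n := by
    intro n; rw [fourierBasis_repr, hcoeff]
  constructor
  · have hsum := (lp.memℓp (fourierBasis.repr G)).summable (by norm_num)
    have h2 : (2 : ℝ≥0∞).toReal = (2 : ℝ) := by norm_num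
    refine hsum.congr fun n => ?_
    rw [hrepr n]
    norm_num
  · have hpars := tsum_sq_fourierCoeff G
    simp only [hcoeff] at hpars
    rw [hpars]
    have : ∀ᵐ t ∂(haarAddCircle (T := 2 * Real.pi)), ‖G t‖ ^ 2 = 1 := by
      filter_upwards [hmem.coeFn_toLp] with t ht
      rw [ht, hFnorm, one_pow]
    rw [integral_congr_ae this]
    simp


lemma abs_facts (j : ℤ) : |j| ≤ |j - 1| + 1 ∧ |j| ≤ |j + 1| + 1 := by
  constructor
  · simpa using abs_add_le (j - 1) 1
  · simpa using abs_add_le (j + 1) (-1)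

lemma summable_int_support {β : Type*} [AddCommMonoid β] [TopologicalSpace β]
    {f : ℤ → β} {M : ℤ} (h : ∀ j : ℤ, M < |j| → f j = 0) : Summable f :=
  summable_of_ne_finset_zero (s := Finset.Icc (-M) M) fun j hj =>
    h j (by rw [Finset.mem_Icc] at hj; rw [lt_abs]; omega)

lemma arcA_combo (a : ℝ) (m : ℕ) : ∃ d : ℤ → ℂ,
    (∀ j : ℤ, (m : ℤ) < |j| → d j = 0) ∧
    (∑' j : ℤ, ‖d j‖) ≤ (|a| + m) ^ m ∧
    ∀ n : ℤ, (n : ℂ) ^ m * arcA a n = ∑' j : ℤ, d j * arcA a (n + j) := by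
  induction m with
  | zero =>
    refine ⟨fun j => if j = 0 then 1 else 0, fun j hj => if_neg (fun h => by simp [h] at hj), ?_, fun n => ?_⟩
    · have : (fun j : ℤ => ‖if j = 0 then (1:ℂ) else 0‖)
          = fun j : ℤ => if j = 0 then (1:ℝ) else 0 := by
        funext j; split_ifs <;> simp
      rw [this, tsum_ite_eq]
      simp
    · have : (fun j : ℤ => (if j = 0 then (1:ℂ) else 0) * arcA a (n + j))
          = fun j : ℤ => if j = 0 then arcA a n else 0 := by
        funext j; split_ifs with h
        · subst h; simp
        · simp
      rw [pow_zero, one_mul, this, tsum_ite_eq]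
  | succ m ih =>
    obtain ⟨d, hd0, hdle, hid⟩ := ih
    have hdsum : Summable fun j : ℤ => ‖d j‖ :=
      summable_int_support (M := (m:ℤ)) fun j hj => by rw [hd0 j hj, norm_zero]
    have hshift : ∀ σ : ℤ, (∑' j : ℤ, ‖d (j + σ)‖) = ∑' j : ℤ, ‖d j‖ := fun σ =>
      (Equiv.addRight σ).tsum_eq (fun j => ‖d j‖)
    have hb1 : ∀ j : ℤ, ‖(-(j:ℂ)) * d j‖ ≤ (m:ℝ) * ‖d j‖ := by
      intro j
      rcases le_or_gt (|j|) (m:ℤ) with h | h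
      · rw [norm_mul, norm_neg, Complex.norm_intCast]
        refine mul_le_mul_of_nonneg_right ?_ (norm_nonneg _)
        rw [← Int.cast_abs]
        exact_mod_cast h
      · simp [hd0 j h]
    have hb2 : ∀ j : ℤ, ‖(a:ℂ)/2 * (d (j-1) + d (j+1))‖
        ≤ |a|/2 * ‖d (j-1)‖ + |a|/2 * ‖d (j+1)‖ := by
      intro j
      rw [norm_mul, norm_div, Complex.norm_real, Complex.norm_ofNat, ← mul_add]
      exact mul_le_mul_of_nonneg_left (norm_add_le _ _) (by positivity)
    have hsum1 : Summable fun j : ℤ => ‖(-(j:ℂ)) * d j‖ :=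
      summable_int_support (M := (m:ℤ)) fun j hj => by rw [hd0 j hj, mul_zero, norm_zero]
    have hsum2 : Summable fun j : ℤ => ‖(a:ℂ)/2 * (d (j-1) + d (j+1))‖ :=
      summable_int_support (M := (m:ℤ) + 1) fun j hj => by
        rw [hd0 (j-1) (by obtain ⟨h1, h2⟩ := abs_facts j; omega), hd0 (j+1) (by obtain ⟨h1, h2⟩ := abs_facts j; omega)]; simp
    have hsumm1 : Summable fun j : ℤ => ‖d (j - 1)‖ :=
      summable_int_support (M := (m:ℤ) + 1) fun j hj => by rw [hd0 (j-1) (by obtain ⟨h1, h2⟩ := abs_facts j; omega), norm_zero]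
    have hsump1 : Summable fun j : ℤ => ‖d (j + 1)‖ :=
      summable_int_support (M := (m:ℤ) + 1) fun j hj => by rw [hd0 (j+1) (by obtain ⟨h1, h2⟩ := abs_facts j; omega), norm_zero]
    refine ⟨fun j => (-(j:ℂ)) * d j + (a:ℂ)/2 * (d (j-1) + d (j+1)), fun j hj => ?_, ?_, fun n => ?_⟩
    · dsimp only
      rw [hd0 j (by obtain ⟨h1, h2⟩ := abs_facts j; omega), hd0 (j-1) (by obtain ⟨h1, h2⟩ := abs_facts j; omega), hd0 (j+1) (by obtain ⟨h1, h2⟩ := abs_facts j; omega)]; ring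
    · calc (∑' j : ℤ, ‖(-(j:ℂ)) * d j + (a:ℂ)/2 * (d (j-1) + d (j+1))‖)
          ≤ ∑' j : ℤ, (‖(-(j:ℂ)) * d j‖ + ‖(a:ℂ)/2 * (d (j-1) + d (j+1))‖) := by
            refine Summable.tsum_le_tsum (fun j => norm_add_le _ _) ?_ (hsum1.add hsum2)
            exact summable_int_support (M := (m:ℤ) + 1) fun j hj => by
              rw [hd0 j (by obtain ⟨h1, h2⟩ := abs_facts j; omega), hd0 (j-1) (by obtain ⟨h1, h2⟩ := abs_facts j; omega), hd0 (j+1) (by obtain ⟨h1, h2⟩ := abs_facts j; omega)]; simp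
        _ = (∑' j : ℤ, ‖(-(j:ℂ)) * d j‖) + ∑' j : ℤ, ‖(a:ℂ)/2 * (d (j-1) + d (j+1))‖ :=
            Summable.tsum_add hsum1 hsum2
        _ ≤ (∑' j : ℤ, (m:ℝ) * ‖d j‖)
            + ∑' j : ℤ, (|a|/2 * ‖d (j-1)‖ + |a|/2 * ‖d (j+1)‖) := by
            refine add_le_add (Summable.tsum_le_tsum hb1 hsum1 (hdsum.mul_left _))
              (Summable.tsum_le_tsum hb2 hsum2 ?_)
            exact (hsumm1.mul_left _).add (hsump1.mul_left _)
        _ = (m:ℝ) * (∑' j : ℤ, ‖d j‖) + (|a|/2 * (∑' j : ℤ, ‖d (j-1)‖)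
            + |a|/2 * ∑' j : ℤ, ‖d (j+1)‖) := by
            rw [Summable.tsum_add (hsumm1.mul_left _) (hsump1.mul_left _), tsum_mul_left, tsum_mul_left,
              tsum_mul_left]
        _ = ((m:ℝ) + |a|) * ∑' j : ℤ, ‖d j‖ := by
            have h1 : (∑' j : ℤ, ‖d (j - 1)‖) = ∑' j : ℤ, ‖d j‖ := by
              simp_rw [sub_eq_add_neg]; exact hshift (-1)
            have h2 : (∑' j : ℤ, ‖d (j + 1)‖) = ∑' j : ℤ, ‖d j‖ := hshift 1
            rw [h1, h2]; ring
        _ ≤ ((m:ℝ) + |a|) * (|a| + m) ^ m :=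
            mul_le_mul_of_nonneg_left hdle (by positivity)
        _ = (|a| + m) ^ (m + 1) := by rw [pow_succ]; ring
        _ ≤ (|a| + (m + 1 : ℕ)) ^ (m + 1) := by
            refine pow_le_pow_left₀ (by positivity) (by push_cast; linarith [abs_nonneg a]) _
    · -- identity
      have hA : ∀ k : ℤ, ∃ C : ℝ, ‖arcA a k‖ ≤ C := fun k => ⟨‖arcA a k‖, le_rfl⟩
      have hu : Summable fun j : ℤ => (a:ℂ)/2 * d j * arcA a (n + (j - 1)) :=
        summable_int_support (M := (m:ℤ)) fun j hj => by rw [hd0 j hj]; ring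
      have hv : Summable fun j : ℤ => (a:ℂ)/2 * d j * arcA a (n + (j + 1)) :=
        summable_int_support (M := (m:ℤ)) fun j hj => by rw [hd0 j hj]; ring
      have hw : Summable fun j : ℤ => (-(j:ℂ)) * d j * arcA a (n + j) :=
        summable_int_support (M := (m:ℤ)) fun j hj => by rw [hd0 j hj]; ring
      have hu' : Summable fun j : ℤ => (a:ℂ)/2 * d (j - 1) * arcA a (n + j) :=
        summable_int_support (M := (m:ℤ) + 1) fun j hj => by rw [hd0 (j-1) (by obtain ⟨h1, h2⟩ := abs_facts j; omega)]; ring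
      have hv' : Summable fun j : ℤ => (a:ℂ)/2 * d (j + 1) * arcA a (n + j) :=
        summable_int_support (M := (m:ℤ) + 1) fun j hj => by rw [hd0 (j+1) (by obtain ⟨h1, h2⟩ := abs_facts j; omega)]; ring
      have hptwise : ∀ j : ℤ, (n:ℂ) * (d j * arcA a (n + j))
          = (-(j:ℂ)) * d j * arcA a (n + j) + ((a:ℂ)/2 * d j * arcA a (n + (j - 1))
            + (a:ℂ)/2 * d j * arcA a (n + (j + 1))) := by
        intro j
        have hrec := arcA_rec a (n + j)
        have e1 : (n + j) - 1 = n + (j - 1) := by ring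
        have e2 : (n + j) + 1 = n + (j + 1) := by ring
        rw [e1, e2] at hrec
        calc (n:ℂ) * (d j * arcA a (n + j))
            = d j * (((n + j : ℤ):ℂ) * arcA a (n + j)) - (j:ℂ) * d j * arcA a (n + j) := by
              push_cast; ring
          _ = d j * ((a:ℂ)/2 * (arcA a (n + (j - 1)) + arcA a (n + (j + 1))))
              - (j:ℂ) * d j * arcA a (n + j) := by rw [hrec]
          _ = (-(j:ℂ)) * d j * arcA a (n + j) + ((a:ℂ)/2 * d j * arcA a (n + (j - 1))
              + (a:ℂ)/2 * d j * arcA a (n + (j + 1))) := by ring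
      have huv : (∑' j : ℤ, (a:ℂ)/2 * d j * arcA a (n + (j - 1)))
          = ∑' j : ℤ, (a:ℂ)/2 * d (j + 1) * arcA a (n + j) := by
        have h := (Equiv.subRight (1:ℤ)).tsum_eq
          (fun j : ℤ => (a:ℂ)/2 * d (j + 1) * arcA a (n + j))
        rw [← h]
        refine tsum_congr fun k => ?_
        have hk : (Equiv.subRight (1:ℤ)) k = k - 1 := rfl
        rw [hk]
        have hk2 : k - 1 + 1 = k := by ring
        rw [hk2]
      have hvu : (∑' j : ℤ, (a:ℂ)/2 * d j * arcA a (n + (j + 1)))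
          = ∑' j : ℤ, (a:ℂ)/2 * d (j - 1) * arcA a (n + j) := by
        have h := (Equiv.addRight (1:ℤ)).tsum_eq
          (fun j : ℤ => (a:ℂ)/2 * d (j - 1) * arcA a (n + j))
        rw [← h]
        refine tsum_congr fun k => ?_
        have hk : (Equiv.addRight (1:ℤ)) k = k + 1 := rfl
        rw [hk]
        have hk2 : k + 1 - 1 = k := by ring
        rw [hk2]
      calc ((n:ℂ)) ^ (m + 1) * arcA a n
          = (n:ℂ) * ((n:ℂ) ^ m * arcA a n) := by ring
        _ = (n:ℂ) * ∑' j : ℤ, d j * arcA a (n + j) := by rw [hid n]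
        _ = ∑' j : ℤ, (n:ℂ) * (d j * arcA a (n + j)) := tsum_mul_left.symm
        _ = ∑' j : ℤ, ((-(j:ℂ)) * d j * arcA a (n + j) + ((a:ℂ)/2 * d j * arcA a (n + (j - 1))
            + (a:ℂ)/2 * d j * arcA a (n + (j + 1)))) := tsum_congr hptwise
        _ = (∑' j : ℤ, (-(j:ℂ)) * d j * arcA a (n + j))
            + ((∑' j : ℤ, (a:ℂ)/2 * d j * arcA a (n + (j - 1)))
              + ∑' j : ℤ, (a:ℂ)/2 * d j * arcA a (n + (j + 1))) := by
            rw [Summable.tsum_add hw (hu.add hv), Summable.tsum_add hu hv]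
        _ = (∑' j : ℤ, (-(j:ℂ)) * d j * arcA a (n + j))
            + ((∑' j : ℤ, (a:ℂ)/2 * d (j + 1) * arcA a (n + j))
              + ∑' j : ℤ, (a:ℂ)/2 * d (j - 1) * arcA a (n + j)) := by rw [huv, hvu]
        _ = ∑' j : ℤ, ((-(j:ℂ)) * d j * arcA a (n + j) + ((a:ℂ)/2 * d (j + 1) * arcA a (n + j)
            + (a:ℂ)/2 * d (j - 1) * arcA a (n + j))) := by
            rw [Summable.tsum_add hw (hv'.add hu'), Summable.tsum_add hv' hu']
        _ = ∑' j : ℤ, ((-(j:ℂ)) * d j + (a:ℂ)/2 * (d (j - 1) + d (j + 1))) * arcA a (n + j) :=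
            tsum_congr fun j => by ring



lemma arcsineFourierCoeff_eq (c : ℝ) (n : ℤ) :
    arcsineFourierCoeff c n = arcA (Real.sqrt 2 / c) n := by
  have h : ∀ t : ℝ, (Real.sqrt 2 * Real.sin t / c : ℝ) = (Real.sqrt 2 / c * Real.sin t : ℝ) :=
    fun t => by ring
  simp only [arcsineFourierCoeff, arcA, arcE, arcf, h]

set_option maxHeartbeats 1000000 in
/-- Moment bound for the discrete arcsine law: the `2m`-th moment
`Σ_{n∈ℤ} (cn)^{2m}|a_n(c)|²` is at most `(√2 + 2|c|m)^{2m}`. -/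
theorem discreteArcsine_even_moment_bound (c : ℝ) (hc : c ≠ 0) (m : ℕ) :
    (∑' n : ℤ, (c * (n : ℝ)) ^ (2 * m) * ‖arcsineFourierCoeff c n‖ ^ 2) ≤
      (Real.sqrt 2 + 2 * |c| * m) ^ (2 * m) := by
  set a : ℝ := Real.sqrt 2 / c with ha
  obtain ⟨d, hd0, hdle, hid⟩ := arcA_combo a m
  obtain ⟨hAsum, hAle⟩ := arcA_parseval a
  set s : Finset ℤ := Finset.Icc (-(m:ℤ)) m with hs
  have hmem : ∀ j : ℤ, j ∉ s → d j = 0 := fun j hj =>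
    hd0 j (by rw [hs, Finset.mem_Icc] at hj; rw [lt_abs]; omega)
  have hdsum : Summable fun j : ℤ => ‖d j‖ := by
    refine summable_of_ne_finset_zero (s := s) fun j hj => by rw [hmem j hj, norm_zero]
  set S : ℝ := ∑ j ∈ s, ‖d j‖ with hSdef
  have hS0 : 0 ≤ S := Finset.sum_nonneg fun j _ => norm_nonneg _
  have hStsum : (∑' j : ℤ, ‖d j‖) = S :=
    tsum_eq_sum fun j hj => by rw [hmem j hj, norm_zero]
  have hSle : S ≤ (|a| + m) ^ m := hStsum ▸ hdle
  -- pointwise: rewrite the general term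
  have hterm : ∀ n : ℤ, (c * (n : ℝ)) ^ (2 * m) * ‖arcsineFourierCoeff c n‖ ^ 2
      = |c| ^ (2 * m) * ‖(n:ℂ) ^ m * arcA a n‖ ^ 2 := by
    intro n
    rw [arcsineFourierCoeff_eq c n]
    have h1 : ‖(n:ℂ) ^ m * arcA a n‖ ^ 2 = (|(n:ℝ)| ^ m) ^ 2 * ‖arcA a n‖ ^ 2 := by
      rw [norm_mul, norm_pow, Complex.norm_intCast, mul_pow]
    have h2 : (c * (n:ℝ)) ^ (2 * m) = |c| ^ (2 * m) * (|(n:ℝ)| ^ m) ^ 2 := by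
      calc (c * (n:ℝ)) ^ (2*m) = |c * (n:ℝ)| ^ (2*m) := (Even.pow_abs (even_two_mul m) _).symm
        _ = (|c| * |(n:ℝ)|) ^ (2*m) := by rw [abs_mul]
        _ = |c| ^ (2*m) * (|(n:ℝ)| ^ m) ^ 2 := by
            rw [mul_pow]; congr 1; rw [mul_comm 2 m, pow_mul]
    rw [h1, h2]; ring
  -- pointwise bound by Cauchy-Schwarz
  have hfin : ∀ n : ℤ, (n:ℂ) ^ m * arcA a n = ∑ j ∈ s, d j * arcA a (n + j) := by
    intro n
    rw [hid n]
    exact tsum_eq_sum fun j hj => by rw [hmem j hj, zero_mul]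
  have hCS : ∀ n : ℤ, ‖(n:ℂ) ^ m * arcA a n‖ ^ 2
      ≤ S * ∑ j ∈ s, ‖d j‖ * ‖arcA a (n + j)‖ ^ 2 := by
    intro n
    rw [hfin n]
    calc ‖∑ j ∈ s, d j * arcA a (n + j)‖ ^ 2
        ≤ (∑ j ∈ s, ‖d j‖ * ‖arcA a (n + j)‖) ^ 2 := by
          refine pow_le_pow_left₀ (norm_nonneg _) ?_ 2
          refine (norm_sum_le _ _).trans (le_of_eq (Finset.sum_congr rfl fun j _ => norm_mul _ _))
      _ = (∑ j ∈ s, Real.sqrt ‖d j‖ * (Real.sqrt ‖d j‖ * ‖arcA a (n + j)‖)) ^ 2 := by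
          refine congrArg (· ^ 2) (Finset.sum_congr rfl fun j _ => ?_)
          rw [← mul_assoc, Real.mul_self_sqrt (norm_nonneg _)]
      _ ≤ (∑ j ∈ s, Real.sqrt ‖d j‖ ^ 2) * ∑ j ∈ s, (Real.sqrt ‖d j‖ * ‖arcA a (n + j)‖) ^ 2 :=
          Finset.sum_mul_sq_le_sq_mul_sq s _ _
      _ = S * ∑ j ∈ s, ‖d j‖ * ‖arcA a (n + j)‖ ^ 2 := by
          congr 1
          · refine Finset.sum_congr rfl fun j _ => Real.sq_sqrt (norm_nonneg _)
          · refine Finset.sum_congr rfl fun j _ => by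
              rw [mul_pow, Real.sq_sqrt (norm_nonneg _)]
  have hshiftsum : ∀ j : ℤ, Summable fun n : ℤ => ‖arcA a (n + j)‖ ^ 2 := fun j =>
    ((Equiv.addRight j).summable_iff).mpr hAsum
  have hshifttsum : ∀ j : ℤ, (∑' n : ℤ, ‖arcA a (n + j)‖ ^ 2) = ∑' n : ℤ, ‖arcA a n‖ ^ 2 :=
    fun j => (Equiv.addRight j).tsum_eq (fun n => ‖arcA a n‖ ^ 2)
  have hgsum : Summable fun n : ℤ => |c| ^ (2*m) * (S * ∑ j ∈ s, ‖d j‖ * ‖arcA a (n + j)‖ ^ 2) := by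
    refine Summable.mul_left _ (Summable.mul_left _ ?_)
    exact summable_sum fun j _ => (hshiftsum j).mul_left _
  calc (∑' n : ℤ, (c * (n : ℝ)) ^ (2 * m) * ‖arcsineFourierCoeff c n‖ ^ 2)
      = ∑' n : ℤ, |c| ^ (2 * m) * ‖(n:ℂ) ^ m * arcA a n‖ ^ 2 := tsum_congr hterm
    _ ≤ ∑' n : ℤ, |c| ^ (2*m) * (S * ∑ j ∈ s, ‖d j‖ * ‖arcA a (n + j)‖ ^ 2) := by
        refine Summable.tsum_le_tsum (fun n => ?_) ?_ hgsum
        · exact mul_le_mul_of_nonneg_left (hCS n) (by positivity)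
        · refine Summable.of_nonneg_of_le (fun n => by positivity)
            (fun n => mul_le_mul_of_nonneg_left (hCS n) (by positivity)) hgsum
    _ = |c| ^ (2*m) * (S * ∑ j ∈ s, ‖d j‖ * ∑' n : ℤ, ‖arcA a (n + j)‖ ^ 2) := by
        rw [tsum_mul_left, tsum_mul_left]
        congr 2
        rw [Summable.tsum_finsetSum (fun j _ => (hshiftsum j).mul_left _)]
        exact Finset.sum_congr rfl fun j _ => tsum_mul_left
    _ ≤ |c| ^ (2*m) * (S * ∑ j ∈ s, ‖d j‖) := by
        refine mul_le_mul_of_nonneg_left (mul_le_mul_of_nonneg_left ?_ hS0) (by positivity)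
        refine Finset.sum_le_sum fun j _ => ?_
        rw [hshifttsum j]
        exact mul_le_of_le_one_right (norm_nonneg _) hAle
    _ = |c| ^ (2*m) * (S * S) := by rw [← hSdef]
    _ ≤ |c| ^ (2*m) * ((|a| + m) ^ m * (|a| + m) ^ m) := by
        refine mul_le_mul_of_nonneg_left (mul_le_mul hSle hSle hS0 (by positivity)) (by positivity)
    _ = (|c| * (|a| + m)) ^ (2 * m) := by
        rw [mul_pow, ← pow_add, ← two_mul]
    _ ≤ (Real.sqrt 2 + 2 * |c| * m) ^ (2 * m) := by
        refine pow_le_pow_left₀ (by positivity) ?_ _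
        have hca : |c| * |a| = Real.sqrt 2 := by
          have hc' : |c| ≠ 0 := abs_ne_zero.mpr hc
          rw [ha, abs_div, _root_.abs_of_nonneg (Real.sqrt_nonneg 2)]
          field_simp
        rw [mul_add, hca]
        have : |c| * (m:ℝ) ≤ 2 * |c| * m := by
          nlinarith [abs_nonneg c, Nat.cast_nonneg (α := ℝ) m]
        linarith
end
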